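/- Let G = (V,E) be a DAG, let L ⊆ V, and let Z₀, Z₁, Z₂ be nodes. Suppose there exists an inducing path π₀₁ from Z₀ to Z₁ with respect to S and L that has an arrowhead at Z₁, and an inducing path π₁₂ from Z₁ to Z₂ with respect to S′ and L that has an arrowhead at Z₁. Then the walk w₀₁₂ = π₀₁π₁₂ obtained by concatenating the two paths can be truncated to an inducing path from Z₀ to Z₂ with respect to S ∪ S′ ∪ {Z₁} and L in G. -/
import Mathlib


/-!
Common definitions: mixed graphs, walks, colliders, m-separation,
ancestral graphs, DAGs, MAGs, proper causal paths, adjustment criteria,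
inducing paths, and MAG marginalization.
-/

universe u

/-- The four possible kinds of edges of a mixed graph, oriented along the
direction of traversal: `u → v`, `u ← v`, `u ↔ v`, `u − v`. -/
inductive EType where
  | right : EType
  | left : EType
  | both : EType
  | undirEdge : EType
deriving DecidableEq

namespace EType

/-- The edge has an arrowhead at its first endpoint. -/
def headFst : EType → Prop
  | .left => True
  | .both => True
  | _ => False

/-- The edge has an arrowhead at its second endpoint. -/
def headSnd : EType → Prop
  | .right => True
  | .both => True
  | _ => False

end EType

/-- A mixed graph with directed, bidirected and undirected edges. -/
structure MixedGraph (V : Type u) where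
  dir : V → V → Prop
  bi : V → V → Prop
  undir : V → V → Prop
  bi_symm : ∀ u v, bi u v → bi v u
  undir_symm : ∀ u v, undir u v → undir v u

namespace MixedGraph

variable {V : Type u}

/-- `G.IsEdge e u v` holds if the graph contains the edge `e` from `u` to `v`
(read in the direction of traversal). -/
def IsEdge (G : MixedGraph V) : EType → V → V → Prop
  | .right, u, v => G.dir u v
  | .left, u, v => G.dir v u
  | .both, u, v => G.bi u v
  | .undirEdge, u, v => G.undir u v

/-- Walks in a mixed graph, remembering the type of every traversed edge. -/
inductive Walk (G : MixedGraph V) : V → V → Type u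
  | nil (v : V) : Walk G v v
  | cons (u v w : V) (e : EType) (h : G.IsEdge e u v) (p : Walk G v w) : Walk G u w

namespace Walk

variable {G : MixedGraph V}

/-- The list of nodes visited by a walk (with multiplicity). -/
def support : {a b : V} → G.Walk a b → List V
  | _, _, .nil v => [v]
  | _, _, .cons u _ _ _ _ p => u :: p.support

/-- A path is a walk without repeated nodes. -/
def IsPath {a b : V} (p : G.Walk a b) : Prop := p.support.Nodup

/-- Auxiliary m-connectivity check: `ph` records whether the previous edge of
the walk has an arrowhead at the current start node.  At every interior node,
the node must be a collider (two arrowheads meet) iff it belongs to `Z`. -/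
def connFrom (Z : Set V) : Prop → {a b : V} → G.Walk a b → Prop
  | _, _, _, .nil _ => True
  | ph, _, _, .cons u _ _ e _ p =>
      ((ph ∧ e.headFst) ↔ u ∈ Z) ∧ p.connFrom Z e.headSnd

/-- The walk m-connects its endpoints given `Z`: all colliders and only
colliders on it are in `Z`. -/
def ConnBy (Z : Set V) : {a b : V} → G.Walk a b → Prop
  | _, _, .nil _ => True
  | _, _, .cons _ _ _ e _ p => p.connFrom Z e.headSnd

/-- A causal (directed) walk: every edge points towards the end node. -/
def IsCausal : {a b : V} → G.Walk a b → Prop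
  | _, _, .nil _ => True
  | _, _, .cons _ _ _ e _ p => e = EType.right ∧ p.IsCausal

/-- A walk is proper w.r.t. `X` if only its start node may belong to `X`. -/
def ProperFrom (X : Set V) : {a b : V} → G.Walk a b → Prop
  | _, _, .nil _ => True
  | _, _, .cons _ _ _ _ _ p => ∀ n ∈ p.support, n ∉ X

/-- Concatenation of walks. -/
def append : {a b c : V} → G.Walk a b → G.Walk b c → G.Walk a c
  | _, _, _, .nil _, q => q
  | _, _, _, .cons u v _ e h p, q => .cons u v _ e h (p.append q)

/-- The walk is nonempty and its first edge has an arrowhead at the start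
node. -/
def headAtStart : {a b : V} → G.Walk a b → Prop
  | _, _, .nil _ => False
  | _, _, .cons _ _ _ e _ _ => e.headFst

/-- The walk is nonempty and its last edge has an arrowhead at the end node. -/
def headAtEnd : {a b : V} → G.Walk a b → Prop
  | _, _, .nil _ => False
  | _, _, .cons _ _ _ e _ (.nil _) => e.headSnd
  | _, _, .cons _ _ _ _ _ p => p.headAtEnd

/-- `P` holds of every (ordered) pair of consecutive nodes of the walk. -/
def edgeProp (P : V → V → Prop) : {a b : V} → G.Walk a b → Prop
  | _, _, .nil _ => True
  | _, _, .cons u v _ _ _ p => P u v ∧ p.edgeProp P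

end Walk

/-- `x` and `y` are m-connected given `Z`: there is a walk between them on
which all colliders and only colliders are in `Z`. -/
def MConn (G : MixedGraph V) (Z : Set V) (x y : V) : Prop :=
  ∃ p : G.Walk x y, p.ConnBy Z

/-- `Z` m-separates the node sets `X` and `Y`. -/
def MSep (G : MixedGraph V) (X Y Z : Set V) : Prop :=
  ∀ x ∈ X, ∀ y ∈ Y, ¬ G.MConn Z x y

/-- `Z` is an m-separator relative to `(X, Y)`: it is disjoint from `X ∪ Y`
and m-separates `X` and `Y`. -/
def IsMSep (G : MixedGraph V) (X Y Z : Set V) : Prop :=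
  Disjoint Z (X ∪ Y) ∧ G.MSep X Y Z

/-- An `M`-minimal m-separator relative to `(X, Y)`. -/
def IsMinMSep (G : MixedGraph V) (X Y M Z : Set V) : Prop :=
  G.IsMSep X Y Z ∧ M ⊆ Z ∧ ∀ Z', Z' ⊂ Z → M ⊆ Z' → ¬ G.IsMSep X Y Z'

/-- One step of the anterior relation: a directed or undirected edge. -/
def antEdge (G : MixedGraph V) (u v : V) : Prop := G.dir u v ∨ G.undir u v

/-- `u` is an anterior of `v` (every node is its own anterior). -/
def Anterior (G : MixedGraph V) (u v : V) : Prop :=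
  Relation.ReflTransGen G.antEdge u v

/-- The set of anteriors of nodes of `W`. -/
def Ant (G : MixedGraph V) (W : Set V) : Set V := {u | ∃ w ∈ W, G.Anterior u w}

/-- `v` is a descendant of `u`, i.e. there is a directed path `u → ⋯ → v`
(every node is its own descendant/ancestor). -/
def Anc (G : MixedGraph V) (u v : V) : Prop := Relation.ReflTransGen G.dir u v

/-- The set of descendants of nodes of `W`. -/
def De (G : MixedGraph V) (W : Set V) : Set V := {v | ∃ w ∈ W, G.Anc w v}

/-- The set of ancestors of nodes of `W`. -/
def AnSet (G : MixedGraph V) (W : Set V) : Set V := {v | ∃ w ∈ W, G.Anc v w}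

/-- An ancestral graph: (1) for each edge `a ← b` or `a ↔ b`, `a` is not an
anterior of `b`; (2) for each edge `a − b` there is no edge `a ← c`, `a ↔ c`,
`b ← c` or `b ↔ c`. -/
def IsAG (G : MixedGraph V) : Prop :=
  (∀ a b, G.dir b a ∨ G.bi a b → ¬ G.Anterior a b) ∧
  (∀ a b, G.undir a b →
    ∀ c, ¬ G.dir c a ∧ ¬ G.bi a c ∧ ¬ G.dir c b ∧ ¬ G.bi b c)

/-- A DAG: only directed edges, and no directed cycles. -/
def IsDAG (G : MixedGraph V) : Prop :=
  (∀ u v, ¬ G.bi u v) ∧ (∀ u v, ¬ G.undir u v) ∧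
  (∀ v, ¬ Relation.TransGen G.dir v v)

/-- Two nodes are adjacent if they are joined by some edge. -/
def Adjacent (G : MixedGraph V) (u v : V) : Prop :=
  G.dir u v ∨ G.dir v u ∨ G.bi u v ∨ G.undir u v

/-- A maximal ancestral graph (MAG): only directed and bidirected edges, no
directed cycle, no almost-directed cycle, and every pair of non-adjacent
nodes can be m-separated by some set of the remaining nodes. -/
def IsMAG (G : MixedGraph V) : Prop :=
  (∀ u v, ¬ G.undir u v) ∧
  (∀ v, ¬ Relation.TransGen G.dir v v) ∧
  (∀ u v, G.bi u v → ¬ Relation.TransGen G.dir v u) ∧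
  (∀ u v, u ≠ v → ¬ G.Adjacent u v →
    ∃ Z : Set V, u ∉ Z ∧ v ∉ Z ∧ ¬ G.MConn Z u v)

/-- `PCP G X Y`: the set of nodes, excluding nodes of `X`, that lie on a
proper causal path from `X` to `Y`. -/
def PCP (G : MixedGraph V) (X Y : Set V) : Set V :=
  {w | w ∉ X ∧ ∃ x ∈ X, ∃ y ∈ Y, ∃ p : G.Walk x y,
    p.IsPath ∧ p.IsCausal ∧ p.ProperFrom X ∧ w ∈ p.support}

/-- `Dpcp G X Y`: the descendants of nodes on proper causal paths. -/
def Dpcp (G : MixedGraph V) (X Y : Set V) : Set V := G.De (G.PCP X Y)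

/-- Remove from `G` all edges into `A` and all edges out of `B`. -/
def rmInOut (G : MixedGraph V) (A B : Set V) : MixedGraph V where
  dir u v := G.dir u v ∧ v ∉ A ∧ u ∉ B
  bi u v := G.bi u v ∧ u ∉ A ∧ v ∉ A
  undir u v := G.undir u v ∧ u ∉ B ∧ v ∉ B
  bi_symm := fun u v h => ⟨G.bi_symm u v h.1, h.2.2, h.2.1⟩
  undir_symm := fun u v h => ⟨G.undir_symm u v h.1, h.2.2, h.2.1⟩

/-- The parametrized proper back-door graph: remove every edge `x → d` with
`x ∈ X` and `d ∈ PCP(X,Y) ∪ C`. -/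
def pbdC (G : MixedGraph V) (X Y C : Set V) : MixedGraph V where
  dir u v := G.dir u v ∧ ¬(u ∈ X ∧ v ∈ G.PCP X Y ∪ C)
  bi := G.bi
  undir := G.undir
  bi_symm := G.bi_symm
  undir_symm := G.undir_symm

/-- The proper back-door graph. -/
def pbd (G : MixedGraph V) (X Y : Set V) : MixedGraph V := G.pbdC X Y ∅

/-- The adjustment criterion (AC) in a DAG: (a) no element of `Z` is a
descendant in `G_{X̄}` of a node outside `X` lying on a proper causal path
from `X` to `Y`; (b) every proper non-causal path from `X` to `Y` is blocked
by `Z`. -/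
def SatisfiesACdag (G : MixedGraph V) (X Y Z : Set V) : Prop :=
  (∀ z ∈ Z, z ∉ (G.rmInOut X ∅).De (G.PCP X Y)) ∧
  (∀ x ∈ X, ∀ y ∈ Y, ∀ p : G.Walk x y,
    p.IsPath → p.ProperFrom X → ¬ p.IsCausal → ¬ p.ConnBy Z)

/-- The adjustment criterion (AC) in a MAG: (a) no element of `Z` is a
descendant in `M` of a node outside `X` lying on a proper causal path from
`X` to `Y`; (b) every proper non-causal path from `X` to `Y` is blocked by
`Z`. -/
def SatisfiesACmag (G : MixedGraph V) (X Y Z : Set V) : Prop :=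
  (∀ z ∈ Z, z ∉ G.Dpcp X Y) ∧
  (∀ x ∈ X, ∀ y ∈ Y, ∀ p : G.Walk x y,
    p.IsPath → p.ProperFrom X → ¬ p.IsCausal → ¬ p.ConnBy Z)

/-- The constructive back-door criterion (CBC): (a) `Z` avoids
`Dpcp(X,Y)`; (b) `Z` m-separates `X` and `Y` in the proper back-door
graph. -/
def SatisfiesCBC (G : MixedGraph V) (X Y Z : Set V) : Prop :=
  (∀ z ∈ Z, z ∉ G.Dpcp X Y) ∧ (G.pbd X Y).MSep X Y Z

/-- The parametrized constructive back-door criterion CBC(A,B,C). -/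
def SatisfiesCBCP (G : MixedGraph V) (X Y Z A B C : Set V) : Prop :=
  (∀ z ∈ Z, z ∉ (G.rmInOut A B).De (G.PCP X Y)) ∧ (G.pbdC X Y C).MSep X Y Z

namespace Walk

variable {G : MixedGraph V}

/-- Auxiliary check for inducing paths: every interior non-collider is in
`L`, and every interior collider is an ancestor of a node of `T`.  `ph`
records whether the previous edge has an arrowhead at the current node. -/
def indFrom (L T : Set V) : Prop → {a b : V} → G.Walk a b → Prop
  | _, _, _, .nil _ => True
  | ph, _, _, .cons u _ _ e _ p =>
      ((ph ∧ e.headFst) → ∃ t ∈ T, Relation.ReflTransGen G.dir u t) ∧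
      (¬(ph ∧ e.headFst) → u ∈ L) ∧ p.indFrom L T e.headSnd

/-- Interior conditions for inducing paths (endpoints are exempt). -/
def indBody (L T : Set V) : {a b : V} → G.Walk a b → Prop
  | _, _, .nil _ => True
  | _, _, .cons _ _ _ e _ p => p.indFrom L T e.headSnd

end Walk

/-- `p` is an inducing path with respect to `Z` and `L`: a path on which
every non-collider other than the endpoints is in `L` and every collider is
an ancestor of the endpoints or of `Z`. -/
def IsInducing (G : MixedGraph V) (Z L : Set V) {a b : V} (p : G.Walk a b) : Prop :=
  p.IsPath ∧ p.indBody L ({a, b} ∪ Z)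

/-- Adjacency in the MAG `G[∅_L`: `u, v ∉ L` are adjacent iff they cannot be
d-separated in `G` by any set `W ⊆ V∖L` (not containing `u, v`). -/
def magAdj (G : MixedGraph V) (L : Set V) (u v : V) : Prop :=
  u ∉ L ∧ v ∉ L ∧ u ≠ v ∧
  ∀ W : Set V, Disjoint W L → u ∉ W → v ∉ W → (G.MConn W u v ∧ G.MConn W v u)

/-- The MAG `G[∅_L` obtained from the DAG `G` by marginalizing `L`: adjacent
`u, v` are joined by `u → v` if `u` is an ancestor of `v` in `G` and `v` is
not an ancestor of `u`, and by `u ↔ v` if neither is an ancestor of the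
other. -/
def mag (G : MixedGraph V) (L : Set V) : MixedGraph V where
  dir u v := G.magAdj L u v ∧ G.Anc u v ∧ ¬ G.Anc v u
  bi u v := G.magAdj L u v ∧ ¬ G.Anc u v ∧ ¬ G.Anc v u
  undir _ _ := False
  bi_symm := fun u v h =>
    ⟨⟨h.1.2.1, h.1.1, h.1.2.2.1.symm,
      fun W hW hv hu => ⟨(h.1.2.2.2 W hW hu hv).2, (h.1.2.2.2 W hW hu hv).1⟩⟩,
      h.2.2, h.2.1⟩
  undir_symm := fun _ _ h => h.elim

/-- An inducing `Z`-trail in the MAG `G[∅_L`: a path whose interior nodes are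
exactly the `Z`-nodes on it, each consecutive pair being linked in `G` by an
inducing path w.r.t. `∅, L` which has arrowheads at the interior nodes. -/
def IsInducingZTrail (G : MixedGraph V) (Z L : Set V) {a b : V}
    (p : (G.mag L).Walk a b) : Prop :=
  p.IsPath ∧ a ∉ Z ∧ b ∉ Z ∧
  (∀ v ∈ p.support, v ≠ a → v ≠ b → v ∈ Z) ∧
  p.edgeProp (fun u v => ∃ q : G.Walk u v, G.IsInducing ∅ L q ∧
    (u ∈ Z → q.headAtStart) ∧ (v ∈ Z → q.headAtEnd))

end MixedGraph

open MixedGraph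

variable {V : Type u}


namespace MixedGraph.Walk

variable {G : MixedGraph V} {L T T' : Set V}

/-- Whether the walk "ends with an arrowhead", where `ph` is used for the
empty walk. -/
def lastHead : Prop → {a b : V} → G.Walk a b → Prop
  | ph, _, _, .nil _ => ph
  | _, _, _, .cons _ _ _ e _ p => lastHead e.headSnd p

lemma lastHead_of_headAtEnd :
    ∀ {a b : V} (w : G.Walk a b), w.headAtEnd → ∀ ph : Prop, w.lastHead ph := by
  intro a b w
  induction w with
  | nil v => intro h; exact h.elim
  | cons u v c e he p ih =>
    intro h ph
    cases p with
    | nil _ => exact h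
    | cons _ _ _ _ _ _ => exact ih h e.headSnd

lemma indFrom_mono (hTT : T ⊆ T') :
    ∀ {a b : V} (w : G.Walk a b) (ph : Prop),
      w.indFrom L T ph → w.indFrom L T' ph := by
  intro a b w
  induction w with
  | nil v => intro _ h; exact h
  | cons u v c e he p ih =>
    intro ph h
    exact ⟨fun hc => (h.1 hc).imp (fun t ht => ⟨hTT ht.1, ht.2⟩),
      h.2.1, ih _ h.2.2⟩

lemma indFrom_true {ph : Prop} (hph : ph) :
    ∀ {a b : V} (w : G.Walk a b), w.indFrom L T ph → w.indFrom L T True := by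
  intro a b w
  cases w with
  | nil v => intro h; exact h
  | cons u v c e he p =>
    intro h
    exact ⟨fun hc => h.1 ⟨hph, hc.2⟩,
      fun hn => h.2.1 (fun hc => hn ⟨trivial, hc.2⟩), h.2.2⟩

/-- In a DAG, the start of a walk satisfying the interior inducing conditions
with an incoming arrowhead is an ancestor of `T`, provided the end is in `T`. -/
lemma fwd (hund : ∀ u v, ¬ G.undir u v) :
    ∀ {a b : V} (w : G.Walk a b), w.indFrom L T True → b ∈ T →
      ∃ t ∈ T, Relation.ReflTransGen G.dir a t := by
  intro a b w
  induction w with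
  | nil v => intro _ hb; exact ⟨v, hb, Relation.ReflTransGen.refl⟩
  | cons u v c e he p ih =>
    intro h hb
    by_cases hf : e.headFst
    · exact h.1 ⟨trivial, hf⟩
    · cases e with
      | left => exact absurd trivial hf
      | both => exact absurd trivial hf
      | undirEdge => exact absurd he (hund _ _)
      | right =>
        obtain ⟨t, ht, hanc⟩ := ih h.2.2 hb
        exact ⟨t, ht, Relation.ReflTransGen.head he hanc⟩

/-- Extract the suffix of a walk starting at an interior occurrence of `u`. -/
lemma suffixAt :
    ∀ {c b : V} (w : G.Walk c b) (ph : Prop), w.indFrom L T ph →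
      ∀ u, u ∈ w.support → u ≠ b →
        ∃ (v₂ : V) (e₂ : EType) (he : G.IsEdge e₂ u v₂) (q : G.Walk v₂ b),
          q.indFrom L T e₂.headSnd ∧ (¬ e₂.headFst → u ∈ L) ∧
          (u :: q.support).Sublist w.support := by
  intro c b w
  induction w with
  | nil v =>
    intro ph _ u hu hub
    simp only [support, List.mem_singleton] at hu
    exact absurd hu hub
  | cons a v d e he p ih =>
    intro ph h u hu hub
    by_cases hua : u = a
    · subst hua
      exact ⟨v, e, he, p, h.2.2,
        fun hnf => h.2.1 (fun hc => hnf hc.2), List.Sublist.refl _⟩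
    · have hu' : u ∈ p.support := by
        simp only [support, List.mem_cons] at hu
        exact hu.resolve_left hua
      obtain ⟨v₂, e₂, he₂, q, h1, h2, h3⟩ := ih _ h.2.2 u hu' hub
      exact ⟨v₂, e₂, he₂, q, h1, h2, h3.cons a⟩

/-- Truncate a walk satisfying the interior inducing conditions to a path. -/
lemma dedup (hund : ∀ u v, ¬ G.undir u v) :
    ∀ {a b : V} (w : G.Walk a b) (ph : Prop), w.indFrom L T ph → b ∈ T →
      ∃ p : G.Walk a b, p.IsPath ∧ p.indFrom L T ph ∧
        p.support.Sublist w.support := by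
  intro a b w
  induction w with
  | nil v =>
    intro ph h _
    exact ⟨.nil v, List.nodup_singleton v, h, List.Sublist.refl _⟩
  | cons a v c e he p ih =>
    intro ph h hb
    obtain ⟨p₁, hp₁path, hp₁ind, hp₁sub⟩ := ih e.headSnd h.2.2 hb
    by_cases hmem : a ∈ p₁.support
    · by_cases hab : a = c
      · subst hab
        refine ⟨.nil a, List.nodup_singleton a, trivial, ?_⟩
        exact (List.singleton_sublist.2 hmem).trans hp₁sub |>.cons a
      · obtain ⟨v₂, e₂, he₂, q, h1, h2, h3⟩ := suffixAt p₁ _ hp₁ind a hmem hab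
        refine ⟨.cons a v₂ c e₂ he₂ q, ?_, ?_, ?_⟩
        · exact h3.nodup hp₁path
        · refine ⟨fun hc => ?_, fun hn => ?_, h1⟩
          · exact fwd hund (.cons a v c e he p) (indFrom_true hc.1 _ h) hb
          · by_cases hph : ph
            · exact h2 (fun hf => hn ⟨hph, hf⟩)
            · exact h.2.1 (fun hc => hph hc.1)
        · exact ((h3.trans hp₁sub).cons a)
    · refine ⟨.cons a v c e he p₁, ?_, ⟨h.1, h.2.1, hp₁ind⟩, hp₁sub.cons₂ a⟩
      exact List.nodup_cons.2 ⟨hmem, hp₁path⟩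

/-- Append two walks meeting with arrowheads at a node of `T`, preserving the
interior inducing conditions. -/
lemma appendInd :
    ∀ {v m c : V} (p : G.Walk v m) (ph : Prop), p.indFrom L T ph →
      ∀ (w2 : G.Walk m c), w2.indBody L T → p.lastHead ph → w2.headAtStart →
        m ∈ T → (p.append w2).indFrom L T ph := by
  intro v m c p
  induction p with
  | nil v =>
    intro ph _ w2 hw2 hlast hstart hm
    cases w2 with
    | nil _ => exact trivial
    | cons m v₂ c e₂ he₂ q =>
      exact ⟨fun _ => ⟨_, hm, Relation.ReflTransGen.refl⟩,
        fun hn => absurd ⟨hlast, hstart⟩ hn, hw2⟩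
  | cons u v d e he p ih =>
    intro ph h w2 hw2 hlast hstart hm
    exact ⟨h.1, h.2.1, ih _ h.2.2 w2 hw2 hlast hstart hm⟩

end MixedGraph.Walk

theorem statement_15 (G : MixedGraph V) (hDAG : G.IsDAG)
    (L S S' : Set V) (hSL : Disjoint S L) (hS'L : Disjoint S' L)
    (Z₀ Z₁ Z₂ : V)
    (π₀₁ : G.Walk Z₀ Z₁) (h₀₁ : G.IsInducing S L π₀₁) (hhead₀₁ : π₀₁.headAtEnd)
    (π₁₂ : G.Walk Z₁ Z₂) (h₁₂ : G.IsInducing S' L π₁₂) (hhead₁₂ : π₁₂.headAtStart) :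
    ∃ p : G.Walk Z₀ Z₂, G.IsInducing (S ∪ S' ∪ {Z₁}) L p ∧
      p.support.Sublist (π₀₁.append π₁₂).support := by
  classical
  obtain ⟨-, hund, -⟩ := hDAG
  set T : Set V := ({Z₀, Z₂} : Set V) ∪ (S ∪ S' ∪ {Z₁}) with hT
  have hT1 : ({Z₀, Z₁} : Set V) ∪ S ⊆ T := by
    intro x hx
    rcases hx with hx | hx
    · rcases hx with hx | hx
      · exact Or.inl (Or.inl hx)
      · exact Or.inr (Or.inr hx)
    · exact Or.inr (Or.inl (Or.inl hx))
  have hT2 : ({Z₁, Z₂} : Set V) ∪ S' ⊆ T := by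
    intro x hx
    rcases hx with hx | hx
    · rcases hx with hx | hx
      · exact Or.inr (Or.inr hx)
      · exact Or.inl (Or.inr hx)
    · exact Or.inr (Or.inl (Or.inr hx))
  have hZ₁T : Z₁ ∈ T := Or.inr (Or.inr rfl)
  have hZ₂T : Z₂ ∈ T := Or.inl (Or.inr rfl)
  have hbody₁₂ : π₁₂.indBody L T :=
    (by cases π₁₂ with
        | nil _ => exact trivial
        | cons _ _ _ e _ q =>
          exact MixedGraph.Walk.indFrom_mono hT2 q e.headSnd h₁₂.2)
  cases π₀₁ with
  | nil _ => exact absurd hhead₀₁ (by simp [Walk.headAtEnd])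
  | cons a v c e he p =>
    have hbody₀₁ : p.indFrom L T e.headSnd :=
      MixedGraph.Walk.indFrom_mono hT1 p e.headSnd h₀₁.2
    have hlast : p.lastHead e.headSnd := by
      cases p with
      | nil _ => exact hhead₀₁
      | cons _ _ _ _ _ q => exact MixedGraph.Walk.lastHead_of_headAtEnd _ hhead₀₁ e.headSnd
    have happ : (p.append π₁₂).indFrom L T e.headSnd :=
      MixedGraph.Walk.appendInd p e.headSnd hbody₀₁ π₁₂ hbody₁₂ hlast hhead₁₂ hZ₁T
    obtain ⟨p', hpath, hind, hsub⟩ :=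
      MixedGraph.Walk.dedup hund (p.append π₁₂) e.headSnd happ hZ₂T
    by_cases hmem : Z₀ ∈ p'.support
    · by_cases h02 : Z₀ = Z₂
      · subst h02
        refine ⟨.nil Z₀, ⟨List.nodup_singleton Z₀, trivial⟩, ?_⟩
        exact ((List.singleton_sublist.2 hmem).trans hsub).cons Z₀
      · obtain ⟨v₂, e₂, he₂, q, h1, -, h3⟩ :=
          MixedGraph.Walk.suffixAt p' _ hind Z₀ hmem h02
        refine ⟨.cons Z₀ v₂ Z₂ e₂ he₂ q, ⟨h3.nodup hpath, h1⟩, ?_⟩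
        exact (h3.trans hsub).cons Z₀
    · exact ⟨.cons Z₀ v Z₂ e he p', ⟨List.nodup_cons.2 ⟨hmem, hpath⟩, hind⟩,
        hsub.cons₂ Z₀⟩
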